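/- Let x_1, …, x_n ∈ ℝ^d with min_i ‖x_i‖² ≥ 3·n·max_{i≠j} |⟨x_i,x_j⟩|, labels y_i ∈ {±1}, and R = max_i‖x_i‖/min_i‖x_i‖. Then the unit vector μ̂/‖μ̂‖ with μ̂ = ∑_i y_i x_i satisfies ⟨μ̂/‖μ̂‖, y_k x_k⟩ ≥ √2·min_i‖x_i‖/(3·R·√n) for every k. -/

import Mathlib

open Real Finset
open scoped RealInnerProductSpace

theorem normalized_sum_yx_margin {d n : ℕ} (hn : 0 < n)
    (x : Fin n → EuclideanSpace ℝ (Fin d)) (y : Fin n → ℝ)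
    (hx : ∀ i, x i ≠ 0)
    (hy : ∀ i, y i = 1 ∨ y i = -1)
    (hne : (Finset.univ : Finset (Fin n)).Nonempty)
    (horth : ∀ i j : Fin n, i ≠ j →
      3 * (n : ℝ) * |⟪x i, x j⟫| ≤ Finset.univ.inf' hne (fun k => ‖x k‖ ^ 2))
    (Rmin Rmax R : ℝ)
    (hRmin : Rmin = Finset.univ.inf' hne (fun k => ‖x k‖))
    (hRmax : Rmax = Finset.univ.sup' hne (fun k => ‖x k‖))
    (hR : R = Rmax / Rmin)
    (μ : EuclideanSpace ℝ (Fin d)) (hμ : μ = ∑ i, y i • x i) :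
    ∀ k : Fin n,
      ⟪‖μ‖⁻¹ • μ, y k • x k⟫ ≥ Real.sqrt 2 * Rmin / (3 * R * Real.sqrt n) := by
  intro k
  set m2 := Finset.univ.inf' hne (fun k => ‖x k‖ ^ 2) with hm2
  have hxpos : ∀ i, 0 < ‖x i‖ := fun i => norm_pos_iff.mpr (hx i)
  have hnpos : (0:ℝ) < n := by exact_mod_cast hn
  have haRmin : 0 < Rmin := by
    rw [hRmin]; exact (Finset.lt_inf'_iff hne).mpr (fun i _ => hxpos i)
  have hle : ∀ i, Rmin ≤ ‖x i‖ := fun i => hRmin ▸ Finset.inf'_le _ (mem_univ i)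
  have hge : ∀ i, ‖x i‖ ≤ Rmax := fun i => hRmax ▸ Finset.le_sup' (fun k => ‖x k‖) (mem_univ i)
  have hbpos : 0 < Rmax := lt_of_lt_of_le haRmin ((hle k).trans (hge k))
  have ha2 : Rmin ^ 2 ≤ m2 := by
    rw [hm2]
    exact (Finset.le_inf'_iff hne _).mpr fun i _ =>
      pow_le_pow_left₀ haRmin.le (hle i) 2
  have hm2pos : 0 < m2 := lt_of_lt_of_le (pow_pos haRmin 2) ha2
  have hm2le : ∀ i, m2 ≤ ‖x i‖ ^ 2 := fun i => Finset.inf'_le _ (mem_univ i)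
  have hb2 : m2 ≤ Rmax ^ 2 :=
    (hm2le k).trans (pow_le_pow_left₀ (hxpos k).le (hge k) 2)
  have hy2 : ∀ i, y i * y i = 1 := by
    intro i; rcases hy i with h | h <;> rw [h] <;> norm_num
  have habs : ∀ i, |y i| = 1 := by
    intro i; rcases hy i with h | h <;> rw [h] <;> norm_num
  -- off-diagonal bound
  have hoff : ∀ i j, i ≠ j → |y i * (y j * ⟪x i, x j⟫)| ≤ m2 / (3 * n) := by
    intro i j hij
    rw [abs_mul, abs_mul, habs i, habs j, one_mul, one_mul,
      le_div_iff₀ (by positivity)]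
    nlinarith [horth i j hij]
  -- inner product expansion
  have hinner : ∀ v : EuclideanSpace ℝ (Fin d), ⟪μ, v⟫ = ∑ i, y i * ⟪x i, v⟫ := by
    intro v
    rw [hμ, sum_inner]
    exact Finset.sum_congr rfl fun i _ => real_inner_smul_left _ _ _
  -- numerator bound
  have hnum : (2/3) * Rmin ^ 2 ≤ ⟪μ, y k • x k⟫ := by
    have hexp : ⟪μ, y k • x k⟫ = ∑ i, y i * (y k * ⟪x i, x k⟫) := by
      rw [hinner]
      exact Finset.sum_congr rfl fun i _ => by rw [real_inner_smul_right]
    rw [hexp, ← Finset.sum_erase_add _ _ (mem_univ k)]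
    have hdiag : y k * (y k * ⟪x k, x k⟫) = ‖x k‖ ^ 2 := by
      rw [← mul_assoc, hy2 k, one_mul, real_inner_self_eq_norm_sq]
    rw [hdiag]
    have hcard : ((Finset.univ.erase k).card : ℝ) ≤ n := by
      have := Finset.card_erase_le (a := k) (s := (Finset.univ : Finset (Fin n)))
      have : (Finset.univ.erase k).card ≤ n := le_trans this (by simp)
      exact_mod_cast this
    have hsum : -(m2/3) ≤ ∑ i ∈ Finset.univ.erase k, y i * (y k * ⟪x i, x k⟫) := by
      have h1 : ∀ i ∈ Finset.univ.erase k, -(m2/(3*n)) ≤ y i * (y k * ⟪x i, x k⟫) := by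
        intro i hi
        have hik : i ≠ k := Finset.ne_of_mem_erase hi
        exact neg_le_of_abs_le (hoff i k hik) |>.trans_eq' rfl
      have hstep : ((Finset.univ.erase k).card : ℝ) * (m2/(3*n)) ≤ m2/3 := by
        calc ((Finset.univ.erase k).card : ℝ) * (m2/(3*n))
            ≤ (n:ℝ) * (m2/(3*n)) :=
              mul_le_mul_of_nonneg_right hcard (by positivity)
          _ = m2/3 := by field_simp
      calc -(m2/3) ≤ ((Finset.univ.erase k).card : ℝ) * (-(m2/(3*n))) := by
            rw [mul_neg, neg_le_neg_iff]; exact hstep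
        _ ≤ ∑ i ∈ Finset.univ.erase k, y i * (y k * ⟪x i, x k⟫) := by
            have := Finset.card_nsmul_le_sum (Finset.univ.erase k) _ _ h1
            simpa [nsmul_eq_mul] using this
    have hxk : m2 ≤ ‖x k‖ ^ 2 := hm2le k
    nlinarith
  have hnumpos : 0 < ⟪μ, y k • x k⟫ :=
    lt_of_lt_of_le (by positivity) hnum
  have hμne : μ ≠ 0 := by
    intro h
    rw [h] at hnumpos
    simp at hnumpos
  have hμpos : 0 < ‖μ‖ := norm_pos_iff.mpr hμne
  -- norm bound
  have hden2 : ‖μ‖ ^ 2 ≤ 2 * n * Rmax ^ 2 := by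
    have hexp : ‖μ‖ ^ 2 = ∑ i, ∑ j, y i * (y j * ⟪x i, x j⟫) := by
      rw [← real_inner_self_eq_norm_sq, hinner]
      refine Finset.sum_congr rfl fun i _ => ?_
      rw [hμ, inner_sum, Finset.mul_sum]
      exact Finset.sum_congr rfl fun j _ => by rw [real_inner_smul_right]
    rw [hexp]
    have hrow : ∀ i : Fin n, ∑ j, y i * (y j * ⟪x i, x j⟫) ≤ Rmax^2 + m2/3 := by
      intro i
      rw [← Finset.sum_erase_add _ _ (mem_univ i)]
      have hdiag : y i * (y i * ⟪x i, x i⟫) = ‖x i‖ ^ 2 := by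
        rw [← mul_assoc, hy2 i, one_mul, real_inner_self_eq_norm_sq]
      rw [hdiag]
      have hcard : ((Finset.univ.erase i).card : ℝ) ≤ n := by
        have h := Finset.card_erase_le (a := i) (s := (Finset.univ : Finset (Fin n)))
        have : (Finset.univ.erase i).card ≤ n := le_trans h (by simp)
        exact_mod_cast this
      have hsum : ∑ j ∈ Finset.univ.erase i, y i * (y j * ⟪x i, x j⟫) ≤ m2/3 := by
        have h1 : ∀ j ∈ Finset.univ.erase i, y i * (y j * ⟪x i, x j⟫) ≤ m2/(3*n) := by
          intro j hj
          have hji : j ≠ i := Finset.ne_of_mem_erase hj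
          exact le_of_abs_le (hoff i j (Ne.symm hji))
        calc ∑ j ∈ Finset.univ.erase i, y i * (y j * ⟪x i, x j⟫)
            ≤ ∑ j ∈ Finset.univ.erase i, m2/(3*n) := Finset.sum_le_sum h1
          _ = ((Finset.univ.erase i).card : ℝ) * (m2/(3*n)) := by
              rw [Finset.sum_const, nsmul_eq_mul]
          _ ≤ n * (m2/(3*n)) := mul_le_mul_of_nonneg_right hcard (by positivity)
          _ = m2/3 := by field_simp
      have hx2 : ‖x i‖ ^ 2 ≤ Rmax ^ 2 := pow_le_pow_left₀ (hxpos i).le (hge i) 2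
      linarith
    calc ∑ i, ∑ j, y i * (y j * ⟪x i, x j⟫) ≤ ∑ _i : Fin n, (Rmax^2 + m2/3) :=
          Finset.sum_le_sum fun i _ => hrow i
      _ = n * (Rmax^2 + m2/3) := by rw [Finset.sum_const, nsmul_eq_mul]; simp
      _ ≤ 2 * n * Rmax ^ 2 := by nlinarith
  have hdenn : ‖μ‖ ≤ Real.sqrt 2 * Real.sqrt n * Rmax := by
    have h1 : ‖μ‖ = Real.sqrt (‖μ‖ ^ 2) := (Real.sqrt_sq (norm_nonneg _)).symm
    rw [h1]
    calc Real.sqrt (‖μ‖^2) ≤ Real.sqrt (2 * n * Rmax ^ 2) := Real.sqrt_le_sqrt hden2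
      _ = Real.sqrt 2 * Real.sqrt n * Rmax := by
          rw [Real.sqrt_mul (by positivity), Real.sqrt_mul (by norm_num),
            Real.sqrt_sq hbpos.le]
  -- final
  have hsqrtn : (0:ℝ) < Real.sqrt n := Real.sqrt_pos.mpr hnpos
  have hsqrt2 : (0:ℝ) < Real.sqrt 2 := Real.sqrt_pos.mpr (by norm_num)
  rw [ge_iff_le, real_inner_smul_left, inv_mul_eq_div, le_div_iff₀ hμpos, hR]
  have hRHS : Real.sqrt 2 * Rmin / (3 * (Rmax/Rmin) * Real.sqrt n) =
      Real.sqrt 2 * Rmin ^ 2 / (3 * Rmax * Real.sqrt n) := by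
    field_simp
  rw [hRHS]
  calc Real.sqrt 2 * Rmin ^ 2 / (3 * Rmax * Real.sqrt n) * ‖μ‖
      ≤ Real.sqrt 2 * Rmin ^ 2 / (3 * Rmax * Real.sqrt n) *
        (Real.sqrt 2 * Real.sqrt n * Rmax) := by
        exact mul_le_mul_of_nonneg_left hdenn (by positivity)
    _ = (2/3) * Rmin ^ 2 := by
        have h2 : Real.sqrt 2 * Real.sqrt 2 = 2 := Real.mul_self_sqrt (by norm_num)
        field_simp
        linear_combination h2
    _ ≤ ⟪μ, y k • x k⟫ := hnum
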